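/- arXiv:1711.02246 — 3 statements merged into one kernel-verified Lean document; each statement's English description precedes it below -/
import Mathlib

section
/- Fix a node v of a CFG and define, on the proper postdominators of v, the relation v1 ≺ v2 to hold iff in every acyclic path from v to End, v1 occurs strictly before v2. Then ≺ is transitive and antisymmetric, and it is total: for any two distinct proper postdominators v1, v2 of v, either v1 ≺ v2 or v2 ≺ v1. Moreover, if v1 ≺ v2 then in every path from v to End, the first occurrence of v1 is strictly before the first occurrence of v2. -/
namespace Slicing

/-- A path is a nonempty list of nodes, consecutive ones related by `succ`,
starting at `v` and ending at `v'`. -/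
def IsPath {V : Type} (succ : V → V → Prop) (p : List V) (v v' : V) : Prop :=
  p.Chain' succ ∧ p.head? = some v ∧ p.getLast? = some v'

/-- A control-flow graph: an edge relation and an `End` node with no successors,
reachable from every node. -/
structure CFG (V : Type) where
  succ : V → V → Prop
  End : V
  end_no_succ : ∀ w, ¬ succ End w
  reach_end : ∀ v, ∃ p, IsPath succ p v End

variable {V : Type}

/-- `v1` postdominates `v`. -/
def PD (G : CFG V) (v v1 : V) : Prop :=
  ∀ p, IsPath G.succ p v G.End → v1 ∈ p

/-- `v1` is a proper postdominator of `v`. -/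
def ProperPD (G : CFG V) (v v1 : V) : Prop :=
  PD G v v1 ∧ v1 ≠ v

/-- `v1` is a first proper postdominator of `v`: every path from `v` to any other
proper postdominator of `v` contains `v1`. -/
def IsFPPD (G : CFG V) (v v1 : V) : Prop :=
  ProperPD G v v1 ∧
    ∀ v2, ProperPD G v v2 → v2 ≠ v1 → ∀ p, IsPath G.succ p v v2 → v1 ∈ p

/-- Maximum number of edges of an acyclic path from `v` to `v'`. -/
noncomputable def LAP (G : CFG V) (v v' : V) : ℕ :=
  sSup {n | ∃ p, IsPath G.succ p v v' ∧ p.Nodup ∧ p.length = n + 1}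

/-- A node is cycle-inducing if, with `v'` its first proper postdominator,
some successor `vi` of `v` satisfies `LAP vi v' ≥ LAP v v'`. -/
def CycleInducing (G : CFG V) (v : V) : Prop :=
  ∃ v', IsFPPD G v v' ∧ ∃ vi, G.succ v vi ∧ LAP G v v' ≤ LAP G vi v'

/-- `v` stays outside `Q` until `v'`: every path from `v` to `v'` in which `v'`
occurs only at the final position contains no node of `Q` except possibly `v'`. -/
def StaysOutside (G : CFG V) (Q : Set V) (v v' : V) : Prop :=
  ∀ p, IsPath G.succ p v v' → v' ∉ p.dropLast → ∀ w ∈ p, w ∈ Q → w = v'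

/-- `v2` is data dependent on `v1`. -/
def DataDep {Var : Type} (G : CFG V) (Def Use : V → Set Var) (v1 v2 : V) : Prop :=
  ∃ x, x ∈ Use v2 ∧ x ∈ Def v1 ∧
    ∃ p, IsPath G.succ p v1 v2 ∧ 2 ≤ p.length ∧ ∀ w ∈ p.tail.dropLast, x ∉ Def w

/-- `Q` is closed under data dependence. -/
def ClosedDD {Var : Type} (G : CFG V) (Def Use : V → Set Var) (Q : Set V) : Prop :=
  ∀ v1 v2, v2 ∈ Q → DataDep G Def Use v1 v2 → v1 ∈ Q

/-- The `Q`-relevant variables at `v`. -/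
def rv {Var : Type} (G : CFG V) (Def Use : V → Set Var) (Q : Set V) (v : V) : Set Var :=
  {x | ∃ v' ∈ Q, x ∈ Use v' ∧
    ∃ p, IsPath G.succ p v v' ∧ p.Nodup ∧ ∀ w ∈ p, w ≠ v' → x ∉ Def w}

/-- `v'` is a next visible in `Q` of `v`. -/
def IsNextVisible (G : CFG V) (Q : Set V) (v v' : V) : Prop :=
  (v' ∈ Q ∨ v' = G.End) ∧
    ∀ u, (u ∈ Q ∨ u = G.End) → ∀ p, IsPath G.succ p v u → v' ∈ p

/-- `Q` provides next visibles. -/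
def ProvidesNextVisibles (G : CFG V) (Q : Set V) : Prop :=
  ∀ v, ∃ v', IsNextVisible G Q v v'

/-- A weak slice set provides next visibles and is closed under data dependence. -/
def WeakSliceSet {Var : Type} (G : CFG V) (Def Use : V → Set Var) (Q : Set V) : Prop :=
  ProvidesNextVisibles G Q ∧ ClosedDD G Def Use Q

end Slicing

namespace Slicing

section PrecHelpers

set_option linter.unusedSectionVars false

variable {V : Type} [DecidableEq V] {succ : V → V → Prop}

lemma getLast?_cons_of_ne_nil' {a : V} {l : List V} (h : l ≠ []) :
    (a :: l).getLast? = l.getLast? := by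
  obtain ⟨c, t, rfl⟩ := List.exists_cons_of_ne_nil h
  rw [List.getLast?_cons_cons]

lemma path_ne_nil {p : List V} {v v' : V} (h : IsPath succ p v v') : p ≠ [] := by
  intro hn; rw [hn] at h; simp [IsPath] at h

lemma isPath_take {p : List V} {v v' a : V} (h : IsPath succ p v v') (ha : a ∈ p) :
    IsPath succ (p.take (p.idxOf a + 1)) v a := by
  have hi : p.idxOf a < p.length := List.idxOf_lt_length_iff.2 ha
  refine ⟨h.1.prefix (List.take_prefix _ _), ?_, ?_⟩
  · obtain ⟨b, t, rfl⟩ := List.exists_cons_of_ne_nil (path_ne_nil h)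
    simpa using h.2.1
  · rw [List.getLast?_eq_getElem?]
    have hlen : (p.take (p.idxOf a + 1)).length = p.idxOf a + 1 := by
      rw [List.length_take]; omega
    rw [hlen]
    simp only [Nat.add_sub_cancel]
    rw [List.getElem?_eq_getElem (by omega), List.getElem_take]
    rw [List.getElem_idxOf hi]

lemma isPath_drop {p : List V} {v v' a : V} (h : IsPath succ p v v') (ha : a ∈ p) :
    IsPath succ (p.drop (p.idxOf a)) a v' := by
  have hi : p.idxOf a < p.length := List.idxOf_lt_length_iff.2 ha
  refine ⟨h.1.suffix (List.drop_suffix _ _), ?_, ?_⟩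
  · rw [List.head?_drop, List.getElem?_eq_getElem hi, List.getElem_idxOf hi]
  · have hne : p.drop (p.idxOf a) ≠ [] := by
      simp [List.drop_eq_nil_iff]; omega
    conv_rhs => rw [← h.2.2]
    conv_rhs => rw [← List.take_append_drop (p.idxOf a) p]
    rw [List.getLast?_append]
    rw [List.getLast?_eq_getElem?, List.getElem?_eq_getElem (by simpa using List.length_pos_iff.2 hne)]
    simp

lemma isPath_append {p q : List V} {v a v' : V} (hp : IsPath succ p v a)
    (hq : IsPath succ q a v') : IsPath succ (p ++ q.tail) v v' := by
  obtain ⟨b, t, rfl⟩ := List.exists_cons_of_ne_nil (path_ne_nil hq)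
  have hb : b = a := by simpa using hq.2.1
  subst hb
  cases t with
  | nil =>
    have hv : v' = b := by simpa using hq.2.2.symm
    subst hv
    simpa using hp
  | cons c t' =>
    refine ⟨?_, ?_, ?_⟩
    · refine hp.1.append (hq.1.tail) ?_
      intro x hx y hy
      rw [hp.2.2] at hx
      simp at hx hy
      exact hx ▸ hy ▸ (List.isChain_cons_cons.1 hq.1).1
    · rw [List.head?_append_of_ne_nil _ (path_ne_nil hp)]
      exact hp.2.1
    · rw [List.getLast?_append]
      have h2 := hq.2.2
      rw [List.getLast?_cons_cons] at h2
      simp only [List.tail_cons]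
      rw [h2]; rfl

lemma exists_nodup_path :
    ∀ n (p : List V) (v v' : V), p.length ≤ n → IsPath succ p v v' →
    ∃ q, IsPath succ q v v' ∧ q.Nodup ∧ q ⊆ p := by
  intro n
  induction n with
  | zero =>
    intro p v v' hlen hp
    exact absurd (List.length_eq_zero_iff.1 (Nat.le_zero.1 hlen)) (path_ne_nil hp)
  | succ n ih =>
    intro p v v' hlen hp
    obtain ⟨b, t, rfl⟩ := List.exists_cons_of_ne_nil (path_ne_nil hp)
    have hb : b = v := by simpa using hp.2.1
    subst hb
    by_cases hv : b ∈ t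
    · have htne : t ≠ [] := List.ne_nil_of_mem hv
      have htp : IsPath succ t (t.head htne) v' := by
        refine ⟨hp.1.tail, by simp [List.head?_eq_head htne], ?_⟩
        rw [← hp.2.2, getLast?_cons_of_ne_nil' htne]
      have hsp : IsPath succ (t.drop (t.idxOf b)) b v' := isPath_drop htp hv
      obtain ⟨q, hq, hqnd, hqsub⟩ := ih _ b v'
        (by have h1 : (b :: t).length ≤ n + 1 := hlen
            simp only [List.length_cons] at h1
            have := List.length_drop (i := t.idxOf b) (l := t)
            omega) hsp
      exact ⟨q, hq, hqnd, fun x hx => List.mem_cons_of_mem _ (List.drop_subset _ _ (hqsub hx))⟩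
    · cases t with
      | nil => exact ⟨[b], ⟨List.isChain_singleton _, by simp, by simpa using hp.2.2⟩, by simp, by simp⟩
      | cons c t' =>
        have htp : IsPath succ (c :: t') c v' := by
          refine ⟨hp.1.tail, by simp, ?_⟩
          rw [← hp.2.2, List.getLast?_cons_cons]
        obtain ⟨q, hq, hqnd, hqsub⟩ := ih (c :: t') c v'
          (Nat.lt_succ_iff.1 (by simpa using hlen)) htp
        refine ⟨b :: q, ⟨?_, by simp, ?_⟩, ?_, ?_⟩
        · refine List.isChain_cons.2 ?_
          refine ⟨?_, hq.1⟩
          intro y hy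
          rw [hq.2.1] at hy
          simp at hy
          exact hy ▸ (List.isChain_cons_cons.1 hp.1).1
        · rw [getLast?_cons_of_ne_nil' (path_ne_nil hq)]
          exact hq.2.2
        · exact List.nodup_cons.2 ⟨fun hvq => hv (hqsub hvq), hqnd⟩
        · exact List.cons_subset_cons b hqsub

lemma indexOf_lt_of_mem_take {l : List V} {x : V} {n : ℕ} (h : x ∈ l.take n) :
    l.idxOf x < n := by
  have h1 : l.idxOf x = (l.take n).idxOf x := by
    conv_lhs => rw [← List.take_append_drop n l]
    exact List.idxOf_append_of_mem h
  calc l.idxOf x = (l.take n).idxOf x := h1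
    _ < (l.take n).length := List.idxOf_lt_length_iff.2 h
    _ ≤ n := by simpa using List.length_take_le n l

lemma mem_take_of_indexOf_lt {l : List V} {x : V} {n : ℕ} (hx : x ∈ l)
    (h : l.idxOf x < n) : x ∈ l.take n := by
  have hi : l.idxOf x < l.length := List.idxOf_lt_length_iff.2 hx
  have hlen : l.idxOf x < (l.take n).length := by rw [List.length_take]; omega
  have : (l.take n)[l.idxOf x] = x := by rw [List.getElem_take]; exact List.getElem_idxOf hi
  exact this ▸ List.getElem_mem hlen

lemma not_mem_drop_of_indexOf_lt {l : List V} (hnd : l.Nodup) {x : V} {n : ℕ}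
    (hx : x ∈ l) (h : l.idxOf x < n) : x ∉ l.drop n := by
  have hdisj : List.Disjoint (l.take n) (l.drop n) := by
    have := hnd
    rw [← List.take_append_drop n l, List.nodup_append] at this
    exact fun a ha hb => this.2.2 a ha a hb rfl
  exact hdisj (mem_take_of_indexOf_lt hx h)

lemma indexOf_inj {l : List V} {x y : V} (hx : x ∈ l) (hy : y ∈ l)
    (h : l.idxOf x = l.idxOf y) : x = y := by
  have hix := List.getElem_idxOf (List.idxOf_lt_length_iff.2 hx)
  have hiy := List.getElem_idxOf (List.idxOf_lt_length_iff.2 hy)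
  rw [← hix, ← hiy]
  congr 1


end PrecHelpers

/-- On the proper postdominators of `v`, the relation "occurs strictly before in every
acyclic path from `v` to `End`" is transitive, antisymmetric and total; moreover if
`v1 ≺ v2` then in every path from `v` to `End` the first occurrence of `v1` is
strictly before the first occurrence of `v2`. -/
theorem prec_ordering {V : Type} [Fintype V] [DecidableEq V]
    (G : CFG V) (v : V) (Prec : V → V → Prop)
    (hPrec : ∀ v1 v2, Prec v1 v2 ↔
      ∀ p, IsPath G.succ p v G.End → p.Nodup → p.idxOf v1 < p.idxOf v2) :
    (∀ v1 v2 v3, ProperPD G v v1 → ProperPD G v v2 → ProperPD G v v3 →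
      Prec v1 v2 → Prec v2 v3 → Prec v1 v3) ∧
    (∀ v1 v2, ProperPD G v v1 → ProperPD G v v2 →
      Prec v1 v2 → Prec v2 v1 → v1 = v2) ∧
    (∀ v1 v2, ProperPD G v v1 → ProperPD G v v2 → v1 ≠ v2 →
      Prec v1 v2 ∨ Prec v2 v1) ∧
    (∀ v1 v2, ProperPD G v v1 → ProperPD G v v2 → Prec v1 v2 →
      ∀ p, IsPath G.succ p v G.End → p.idxOf v1 < p.idxOf v2) := by
  obtain ⟨p0, hp0⟩ := G.reach_end v
  obtain ⟨q0, hq0, hq0nd, -⟩ := exists_nodup_path p0.length p0 v G.End le_rfl hp0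
  refine ⟨?_, ?_, ?_, ?_⟩
  · intro v1 v2 v3 _ _ _ h12 h23
    rw [hPrec] at h12 h23 ⊢
    intro p hp hnd
    exact lt_trans (h12 p hp hnd) (h23 p hp hnd)
  · intro v1 v2 _ _ h12 h21
    rw [hPrec] at h12 h21
    exact absurd (h12 q0 hq0 hq0nd) (not_lt.2 (le_of_lt (h21 q0 hq0 hq0nd)))
  · intro v1 v2 h1 h2 hne
    by_contra hcon
    push_neg at hcon
    obtain ⟨hn12, hn21⟩ := hcon
    rw [hPrec] at hn12 hn21
    push_neg at hn12 hn21
    obtain ⟨p, hp, hpnd, hple⟩ := hn12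
    obtain ⟨q, hq, hqnd, hqle⟩ := hn21
    have hv1p : v1 ∈ p := h1.1 p hp
    have hv2p : v2 ∈ p := h2.1 p hp
    have hv1q : v1 ∈ q := h1.1 q hq
    have hv2q : v2 ∈ q := h2.1 q hq
    have hplt : p.idxOf v2 < p.idxOf v1 :=
      lt_of_le_of_ne hple (fun h => hne (indexOf_inj hv2p hv1p h).symm)
    have hqlt : q.idxOf v1 < q.idxOf v2 :=
      lt_of_le_of_ne hqle (fun h => hne (indexOf_inj hv1q hv2q h))
    have hr : IsPath G.succ (q.take (q.idxOf v1 + 1) ++ (p.drop (p.idxOf v1)).tail) v G.End :=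
      isPath_append (isPath_take hq hv1q) (isPath_drop hp hv1p)
    have hv2r := h2.1 _ hr
    rw [List.mem_append] at hv2r
    rcases hv2r with h | h
    · have := indexOf_lt_of_mem_take h
      omega
    · exact not_mem_drop_of_indexOf_lt hpnd hv2p hplt (List.tail_subset _ h)
  · intro v1 v2 h1 h2 h12 p hp
    have hq0lt := (hPrec v1 v2).1 h12 q0 hq0 hq0nd
    have hne : v1 ≠ v2 := fun h => by rw [h] at hq0lt; omega
    have hv1p := h1.1 p hp
    have hv2p := h2.1 p hp
    by_contra hcon
    have hplt : p.idxOf v2 < p.idxOf v1 :=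
      lt_of_le_of_ne (not_lt.1 hcon) (fun h => hne (indexOf_inj hv2p hv1p h).symm)
    have hv1q0 := h1.1 q0 hq0
    have hv2q0 := h2.1 q0 hq0
    have hr : IsPath G.succ (p.take (p.idxOf v2 + 1) ++ (q0.drop (q0.idxOf v2)).tail) v G.End :=
      isPath_append (isPath_take hp hv2p) (isPath_drop hq0 hv2q0)
    have hv1r := h1.1 _ hr
    rw [List.mem_append] at hv1r
    rcases hv1r with h | h
    · have := indexOf_lt_of_mem_take h
      omega
    · exact not_mem_drop_of_indexOf_lt hq0nd hv1q0 hq0lt (List.tail_subset _ h)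


end Slicing
end

section
/- In a CFG, every cycle contains at least one node which is cycle-inducing. -/
namespace Slicing


section Helpers

variable {V : Type}

lemma isPath_ne_nil {succ : V → V → Prop} {p : List V} {v v' : V}
    (h : IsPath succ p v v') : p ≠ [] := by
  rintro rfl; simp [IsPath] at h

lemma isPath_join {succ : V → V → Prop} {p q : List V} {v v' v'' : V}
    (hp : IsPath succ p v v') (hq : IsPath succ q v' v'') :
    IsPath succ (p.dropLast ++ q) v v'' := by
  obtain ⟨hc, hh, hl⟩ := hp
  have hpne : p ≠ [] := isPath_ne_nil ⟨hc, hh, hl⟩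
  obtain ⟨hc', hh', hl'⟩ := hq
  have hqne : q ≠ [] := isPath_ne_nil ⟨hc', hh', hl'⟩
  have hglast : p.getLast hpne = v' := by
    rw [List.getLast?_eq_getLast hpne] at hl
    exact Option.some.inj hl
  rcases eq_or_ne p.dropLast [] with hd | hd
  · have hps : p = [v] := by
      cases p with
      | nil => exact absurd rfl hpne
      | cons a t =>
        cases t with
        | nil => simp_all
        | cons b t' => simp at hd
    have hvv' : v = v' := by
      subst hps
      simpa using hglast
    rw [hps]
    simp only [List.dropLast_singleton, List.nil_append]
    exact hvv' ▸ ⟨hc', hh', hl'⟩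
  · have hdecomp : p.dropLast ++ [v'] = p := by
      rw [← hglast]; exact List.dropLast_append_getLast hpne
    constructor
    · unfold List.Chain'; rw [List.isChain_append]
      refine ⟨hc.prefix (List.dropLast_prefix p), hc', ?_⟩
      intro x hx y hy
      have hc2 : List.Chain' succ (p.dropLast ++ [v']) := by rw [hdecomp]; exact hc
      unfold List.Chain' at hc2; rw [List.isChain_append] at hc2
      have := hc2.2.2 x hx v' (by simp)
      rw [hh'] at hy
      cases hy
      exact this
    constructor
    · rw [List.head?_append]
      have : p.dropLast.head? = some v := by
        have h3 : (p.dropLast ++ [v']).head? = some v := by rw [hdecomp]; exact hh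
        rw [List.head?_append] at h3
        cases hdd : p.dropLast.head? with
        | none => exact absurd (List.head?_eq_none_iff.mp hdd) hd
        | some z => rw [hdd] at h3; simpa using h3
      rw [this]; rfl
    · rw [List.getLast?_append, hl']; rfl

lemma isPath_split {succ : V → V → Prop} {a b : List V} {w v v'' : V}
    (h : IsPath succ (a ++ w :: b) v v'') :
    IsPath succ (a ++ [w]) v w ∧ IsPath succ (w :: b) w v'' := by
  obtain ⟨hc, hh, hl⟩ := h
  have hpref : (a ++ [w]) <+: (a ++ w :: b) := ⟨b, by simp⟩
  have hsuf : (w :: b) <:+ (a ++ w :: b) := ⟨a, rfl⟩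
  refine ⟨⟨hc.prefix hpref, ?_, ?_⟩, hc.suffix hsuf, rfl, ?_⟩
  · rw [List.head?_append] at hh ⊢
    simpa using hh
  · rw [List.getLast?_append]; rfl
  · rw [List.getLast?_append] at hl
    obtain ⟨z, hz⟩ : ∃ z, (w :: b).getLast? = some z :=
      ⟨(w :: b).getLast (by simp), List.getLast?_eq_getLast (by simp)⟩
    rw [hz] at hl ⊢
    simpa using hl

lemma exists_dup_decomp {p : List V} (h : ¬ p.Nodup) :
    ∃ (a b c : List V) (x : V), p = a ++ x :: b ++ x :: c := by
  induction p with
  | nil => simp at h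
  | cons y t ih =>
    by_cases hy : y ∈ t
    · obtain ⟨b, c, rfl⟩ := List.append_of_mem hy
      exact ⟨[], b, c, y, rfl⟩
    · have : ¬ t.Nodup := fun hn => h (List.nodup_cons.mpr ⟨hy, hn⟩)
      obtain ⟨a, b, c, x, rfl⟩ := ih this
      exact ⟨y :: a, b, c, x, rfl⟩

lemma isPath_shrink {succ : V → V → Prop} :
    ∀ (n : ℕ) {p : List V} {v v' : V}, p.length ≤ n → IsPath succ p v v' →
    ∃ q, IsPath succ q v v' ∧ q.Nodup ∧ q.length ≤ p.length := by
  intro n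
  induction n with
  | zero =>
    intro p v v' hn hp
    have := isPath_ne_nil hp
    simp [List.length_eq_zero_iff.mp (Nat.le_zero.mp hn)] at this
  | succ n ih =>
    intro p v v' hn hp
    by_cases hnd : p.Nodup
    · exact ⟨p, hp, hnd, le_rfl⟩
    · obtain ⟨a, b, c, x, rfl⟩ := exists_dup_decomp hnd
      have h1 : IsPath succ (a ++ [x]) v x ∧ IsPath succ (x :: (b ++ x :: c)) x v' := by
        have : a ++ x :: b ++ x :: c = a ++ x :: (b ++ x :: c) := by simp
        exact isPath_split (this ▸ hp)
      have h2 : IsPath succ (x :: c) x v' := by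
        have : x :: (b ++ x :: c) = (x :: b) ++ x :: c := by simp
        exact (isPath_split (this ▸ h1.2)).2
      have h3 : IsPath succ (a ++ x :: c) v v' := by
        have := isPath_join h1.1 h2
        simpa using this
      have hlen : (a ++ x :: c).length ≤ n := by
        have := hn
        simp only [List.length_append, List.length_cons] at this ⊢
        omega
      obtain ⟨q, hq, hqnd, hqlen⟩ := ih hlen h3
      refine ⟨q, hq, hqnd, le_trans hqlen ?_⟩
      simp only [List.length_append, List.length_cons]
      omega

lemma lap_bddAbove [Fintype V] (G : CFG V) (v v' : V) :
    BddAbove {n | ∃ p, IsPath G.succ p v v' ∧ p.Nodup ∧ p.length = n + 1} := by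
  refine ⟨Fintype.card V, ?_⟩
  rintro n ⟨p, hp, hnd, hlen⟩
  have := hnd.length_le_card
  omega

lemma le_lap [Fintype V] (G : CFG V) {v v' : V} {p : List V}
    (hp : IsPath G.succ p v v') (hnd : p.Nodup) : p.length ≤ LAP G v v' + 1 := by
  have hne := isPath_ne_nil hp
  have hlen : 1 ≤ p.length := by
    cases p with
    | nil => exact absurd rfl hne
    | cons a t => simp
  have hmem : p.length - 1 ∈ {n | ∃ q, IsPath G.succ q v v' ∧ q.Nodup ∧ q.length = n + 1} :=
    ⟨p, hp, hnd, by omega⟩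
  have := le_csSup (lap_bddAbove G v v') hmem
  unfold LAP
  omega

lemma lap_spec [Fintype V] (G : CFG V) {v v' : V} (h : ∃ p, IsPath G.succ p v v') :
    ∃ p, IsPath G.succ p v v' ∧ p.Nodup ∧ p.length = LAP G v v' + 1 := by
  obtain ⟨p, hp⟩ := h
  obtain ⟨q, hq, hnd, _⟩ := isPath_shrink p.length le_rfl hp
  have hqne := isPath_ne_nil hq
  have hqlen : 1 ≤ q.length := by
    cases q with
    | nil => exact absurd rfl hqne
    | cons a t => simp
  have hne : {n | ∃ r, IsPath G.succ r v v' ∧ r.Nodup ∧ r.length = n + 1}.Nonempty :=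
    ⟨q.length - 1, q, hq, hnd, by omega⟩
  exact Nat.sSup_mem hne (lap_bddAbove G v v')

lemma mem_of_getLast? {p : List V} {x : V} (h : p.getLast? = some x) : x ∈ p := by
  cases p with
  | nil => simp at h
  | cons a t =>
    rw [List.getLast?_eq_getLast (by simp)] at h
    exact (Option.some.inj h) ▸ List.getLast_mem _

lemma pd_end (G : CFG V) (v : V) : PD G v G.End := by
  intro p hp
  exact mem_of_getLast? hp.2.2

lemma pd_succ (G : CFG V) {x y F : V} (hxy : G.succ x y) (hPD : PD G x F)
    (hne : F ≠ x) : PD G y F := by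
  intro r hr
  have hpath : IsPath G.succ (x :: r) x G.End := by
    refine ⟨List.isChain_cons.mpr ⟨?_, hr.1⟩, rfl, ?_⟩
    · intro z hz
      rw [hr.2.1] at hz
      cases hz
      exact hxy
    · have : (x :: r) = [x] ++ r := rfl
      rw [this, List.getLast?_append, hr.2.2]; rfl
  have := hPD _ hpath
  rcases List.mem_cons.mp this with h | h
  · exact absurd h hne
  · exact h

lemma getLast_not_mem_dropLast {p : List V} (hnd : p.Nodup) {x : V}
    (h : p.getLast? = some x) : x ∉ p.dropLast := by
  have hne : p ≠ [] := by rintro rfl; simp at h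
  have hx : p.getLast hne = x := by
    rw [List.getLast?_eq_getLast hne] at h
    exact Option.some.inj h
  have hdecomp : p.dropLast ++ [x] = p := by rw [← hx]; exact List.dropLast_append_getLast hne
  have := hnd
  rw [← hdecomp, List.nodup_append] at this
  intro hmem
  exact this.2.2 x hmem x (by simp) rfl

lemma pd_of_mem_dropLast (G : CFG V) {v F : V} (hPD : PD G v F) {p : List V}
    (hp : IsPath G.succ p v F) (hnd : p.Nodup) {w : V} (hw : w ∈ p.dropLast) :
    PD G w F := by
  have hFdl : F ∉ p.dropLast := getLast_not_mem_dropLast hnd hp.2.2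
  obtain ⟨a, b, hab⟩ := List.append_of_mem hw
  have hne : p ≠ [] := isPath_ne_nil hp
  have hdecomp : p.dropLast ++ [p.getLast hne] = p := List.dropLast_append_getLast hne
  have hpeq : p = a ++ w :: (b ++ [p.getLast hne]) := by
    conv_lhs => rw [← hdecomp]
    rw [hab]; simp
  have hp2 : IsPath G.succ (a ++ w :: (b ++ [p.getLast hne])) v F := by
    rw [← hpeq]; exact hp
  have hsp := (isPath_split hp2).1
  have hFa : F ∉ a := fun hmem => hFdl (by rw [hab]; exact List.mem_append_left _ hmem)
  intro r hr
  have hjoin := isPath_join hsp hr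
  have hFin := hPD _ hjoin
  rw [List.mem_append] at hFin
  rcases hFin with h | h
  · exfalso
    apply hFa
    have : (a ++ [w]).dropLast = a := by simp
    exact this ▸ h
  · exact h

lemma lap_split [Fintype V] (G : CFG V) {b F : V} (hPD : PD G b F) :
    LAP G b G.End ≤ LAP G b F + LAP G F G.End := by
  obtain ⟨p, hp, hnd, hlen⟩ := lap_spec G (G.reach_end b)
  have hF : F ∈ p := hPD p hp
  obtain ⟨a, c, rfl⟩ := List.append_of_mem hF
  obtain ⟨h1, h2⟩ := isPath_split hp
  have hnd1 : (a ++ [F]).Nodup :=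
    List.Nodup.sublist (List.IsPrefix.sublist ⟨c, by simp⟩) hnd
  have hnd2 : (F :: c).Nodup :=
    List.Nodup.sublist (List.IsSuffix.sublist ⟨a, rfl⟩) hnd
  have l1 := le_lap G h1 hnd1
  have l2 := le_lap G h2 hnd2
  simp only [List.length_append, List.length_cons] at hlen l1 l2
  omega

lemma lap_join [Fintype V] (G : CFG V) {a F : V} (hPD : PD G a F) (hne : F ≠ a)
    (hex : ∃ p, IsPath G.succ p a F) :
    LAP G a F + LAP G F G.End ≤ LAP G a G.End := by
  obtain ⟨p, hp, hndp, hlenp⟩ := lap_spec G hex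
  obtain ⟨q, hq, hndq, hlenq⟩ := lap_spec G (G.reach_end F)
  have hjoin := isPath_join hp hq
  have hFdl : F ∉ p.dropLast := getLast_not_mem_dropLast hndp hp.2.2
  have hnd : (p.dropLast ++ q).Nodup := by
    rw [List.nodup_append]
    refine ⟨List.Nodup.sublist (List.dropLast_sublist p) hndp, hndq, ?_⟩
    rintro x hx _ hxq rfl
    have hxPD : PD G x F := pd_of_mem_dropLast G hPD hp hndp hx
    have hxF : x ≠ F := fun h => hFdl (h ▸ hx)
    obtain ⟨c, d, hqeq⟩ := List.append_of_mem hxq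
    have hsp : IsPath G.succ (x :: d) x G.End := (isPath_split (hqeq ▸ hq)).2
    have hFin : F ∈ x :: d := hxPD _ hsp
    cases c with
    | nil =>
      have : q.head? = some x := by rw [hqeq]; rfl
      rw [hq.2.1] at this
      exact hxF (Option.some.inj this).symm
    | cons y c' =>
      have hy : y = F := by
        have : q.head? = some y := by rw [hqeq]; rfl
        rw [hq.2.1] at this
        exact (Option.some.inj this).symm
      rw [hy] at hqeq
      have hsub : (F :: (c' ++ x :: d)).Nodup := by
        rw [← List.cons_append, ← hqeq]; exact hndq
      rw [List.nodup_cons] at hsub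
      exact hsub.1 (List.mem_append_right _ hFin)
  have hple : 1 ≤ p.length := by
    cases p with
    | nil => exact absurd rfl (isPath_ne_nil hp)
    | cons z t => simp
  have := le_lap G hjoin hnd
  rw [List.length_append, List.length_dropLast] at this
  omega

lemma first_sat {P : V → Prop} :
    ∀ {q : List V} {w : V}, w ∈ q → P w →
    ∃ x a b, q = a ++ x :: b ∧ P x ∧ ∀ y ∈ a, ¬ P y := by
  intro q
  induction q with
  | nil => intro w hw; simp at hw
  | cons h t ih =>
    intro w hw hP
    by_cases hPh : P h
    · exact ⟨h, [], t, rfl, hPh, by simp⟩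
    · have hwt : w ∈ t := by
        rcases List.mem_cons.mp hw with rfl | hm
        · exact absurd hP hPh
        · exact hm
      obtain ⟨x, a, b, rfl, hx, ha⟩ := ih hwt hP
      refine ⟨x, h :: a, b, rfl, hx, ?_⟩
      rintro y hy
      rcases List.mem_cons.mp hy with rfl | hm
      · exact hPh
      · exact ha y hm

lemma exists_fppd (G : CFG V) {v : V} (hv : v ≠ G.End) : ∃ F, IsFPPD G v F := by
  obtain ⟨p0, hp0⟩ := G.reach_end v
  obtain ⟨q, hq, hnd, _⟩ := isPath_shrink p0.length le_rfl hp0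
  have hEndq : G.End ∈ q := mem_of_getLast? hq.2.2
  have hEndPPD : ProperPD G v G.End := ⟨pd_end G v, Ne.symm hv⟩
  obtain ⟨F, a, b, hqeq, hF, ha⟩ := first_sat (P := ProperPD G v) hEndq hEndPPD
  refine ⟨F, hF, ?_⟩
  intro v2 hv2 hne r hr
  by_contra hFr
  have hv2q : v2 ∈ a ++ F :: b := hqeq ▸ hv2.1 _ hq
  have hv2b : v2 ∈ b := by
    rcases List.mem_append.mp hv2q with h | h
    · exact absurd hv2 (ha _ h)
    · rcases List.mem_cons.mp h with rfl | h
      · exact absurd rfl hne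
      · exact h
  obtain ⟨c, d, hb⟩ := List.append_of_mem hv2b
  have hsplit : IsPath G.succ (v2 :: d) v2 G.End := by
    have heq : q = (a ++ F :: c) ++ v2 :: d := by rw [hqeq, hb]; simp
    exact (isPath_split (heq ▸ hq)).2
  have hjoin := isPath_join hr hsplit
  have hFin : F ∈ r.dropLast ++ v2 :: d := hF.1 _ hjoin
  rcases List.mem_append.mp hFin with h | h
  · exact hFr ((List.dropLast_sublist r).subset h)
  · have hsub : (F :: (c ++ v2 :: d)).Nodup := by
      have heq : q = a ++ F :: (c ++ v2 :: d) := by rw [hqeq, hb]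
      exact List.Nodup.sublist (List.IsSuffix.sublist ⟨a, heq.symm⟩) hnd
    rw [List.nodup_cons] at hsub
    exact hsub.1 (List.mem_append_right _ h)

lemma edge_dec [Fintype V] (G : CFG V) {x y : V} (hxy : G.succ x y)
    (hCI : ¬ CycleInducing G x) : LAP G y G.End < LAP G x G.End := by
  have hx : x ≠ G.End := fun h => G.end_no_succ y (h ▸ hxy)
  obtain ⟨F, hF⟩ := exists_fppd G hx
  have hPDx : PD G x F := hF.1.1
  have hFx : F ≠ x := hF.1.2
  have hPDy : PD G y F := pd_succ G hxy hPDx hFx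
  have hlt : LAP G y F < LAP G x F := by
    by_contra hle
    exact hCI ⟨F, hF, y, hxy, Nat.not_lt.mp hle⟩
  have hexF : ∃ p, IsPath G.succ p x F := by
    obtain ⟨p, hp⟩ := G.reach_end x
    obtain ⟨a, b, rfl⟩ := List.append_of_mem (hPDx p hp)
    exact ⟨a ++ [F], (isPath_split hp).1⟩
  have h1 := lap_split G hPDy
  have h2 := lap_join G hPDx hFx hexF
  omega

lemma chain'_strengthen {R Q : V → V → Prop} :
    ∀ {l : List V}, l.Chain' R → (∀ a ∈ l, ∀ b ∈ l, R a b → Q a b) → l.Chain' Q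
  | [], _, _ => List.isChain_nil
  | [_], _, _ => List.isChain_singleton _
  | x :: y :: t, h, himp => by
    unfold List.Chain' at h ⊢; rw [List.isChain_cons_cons] at h ⊢
    exact ⟨himp x (by simp) y (by simp) h.1,
      chain'_strengthen h.2 (fun a ha b hb hr =>
        himp a (List.mem_cons_of_mem _ ha) b (List.mem_cons_of_mem _ hb) hr)⟩

end Helpers

/-- Every cycle contains at least one cycle-inducing node. -/
theorem cycle_contains_cycle_inducing {V : Type} [Fintype V] (G : CFG V)
    (u : V) (p : List V) (hp : IsPath G.succ p u u) (hlen : 2 ≤ p.length) :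
    ∃ w ∈ p, CycleInducing G w := by
  by_contra h
  push_neg at h
  have key : p.Chain' (fun a b => LAP G b G.End < LAP G a G.End) :=
    chain'_strengthen hp.1 (fun a ha b _ hr => edge_dec G hr (h a ha))
  have htrans : IsTrans V (fun a b => LAP G b G.End < LAP G a G.End) :=
    ⟨fun _ _ _ h1 h2 => h2.trans h1⟩
  haveI : Trans (fun a b : V => LAP G b G.End < LAP G a G.End) (fun a b : V => LAP G b G.End < LAP G a G.End) (fun a b : V => LAP G b G.End < LAP G a G.End) := ⟨fun h1 h2 => htrans.trans _ _ _ h1 h2⟩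
  have hpw := List.isChain_iff_pairwise.mp key
  obtain ⟨t, rfl⟩ : ∃ t, p = u :: t := by
    cases p with
    | nil => simp [IsPath] at hp
    | cons a t =>
      have := hp.2.1
      simp only [List.head?_cons, Option.some.injEq] at this
      exact ⟨t, by rw [this]⟩
  have htne : t ≠ [] := by
    rintro rfl
    simp at hlen
  have hlast : (u :: t).getLast (by simp) = u := by
    have h2 := hp.2.2
    rw [List.getLast?_eq_getLast (by simp)] at h2
    exact Option.some.inj h2
  have hmem : u ∈ t := by
    rw [List.getLast_cons htne] at hlast
    exact hlast ▸ List.getLast_mem htne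
  have := (List.pairwise_cons.mp hpw).1 u hmem
  exact absurd this (lt_irrefl _)

end Slicing
end

section
/- In a CFG, if nextq(Q,v) exists and v ∉ Q ∪ {End}, then v stays outside Q until fppd(v). -/
namespace Slicing

lemma isPath_take_s10 {V : Type} {succ : V → V → Prop} {p : List V} {v v' : V}
    (hp : IsPath succ p v v') (i : ℕ) (hi : i < p.length) :
    IsPath succ (p.take (i+1)) v p[i] := by
  refine ⟨hp.1.prefix (List.take_prefix _ _), ?_, ?_⟩
  · rw [List.head?_take]
    simp [hp.2.1]
  · have hlen : (p.take (i+1)).length = i+1 := by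
      rw [List.length_take]; omega
    rw [List.getLast?_eq_getElem?, hlen]
    have hlt : i + 1 - 1 < (p.take (i+1)).length := by omega
    rw [List.getElem?_eq_getElem hlt, List.getElem_take]
    simp

/-- If `nextq(Q,v)` exists and `v ∉ Q ∪ {End}`, then `v` stays outside `Q`
until its first proper postdominator. -/
theorem notQ_staysOutside {V : Type} [Fintype V] (G : CFG V) (Q : Set V) (v : V)
    (hnv : ∃ u, IsNextVisible G Q v u) (hvQ : v ∉ Q) (hvE : v ≠ G.End)
    (v' : V) (hf : IsFPPD G v v') :
    StaysOutside G Q v v' := by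
  classical
  intro p hp hnd w hwp hwQ
  by_contra hne
  obtain ⟨u, huQ, hu⟩ := hnv
  have hpne : p ≠ [] := by rintro rfl; simp [IsPath] at hp
  have hlast : p.getLast hpne = v' := by
    have h := hp.2.2
    rwa [List.getLast?_eq_getLast hpne, Option.some_inj] at h
  have hwd : w ∈ p.dropLast := by
    have h := (List.dropLast_append_getLast hpne) ▸ hwp
    rcases List.mem_append.1 h with h1 | h1
    · exact h1
    · rw [hlast] at h1
      simp at h1
      exact absurd h1 hne
  set i := p.dropLast.idxOf w with hidef
  have hiL : i < p.dropLast.length := List.idxOf_lt_length_iff.2 hwd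
  have hdl : p.dropLast.length = p.length - 1 := List.length_dropLast (xs := p)
  have hiP : i < p.length := by omega
  have hgi : p[i] = w := by
    have h := List.getElem_idxOf hiL
    rwa [List.getElem_dropLast] at h
  set q := p.take (i+1) with hqdef
  have hq : IsPath G.succ q v w := hgi ▸ isPath_take_s10 hp i hiP
  have hqpre : q <+: p.dropLast := by
    have heq : p.dropLast.take (i+1) = q := by
      rw [hqdef, List.dropLast_eq_take, List.take_take]
      congr 1
      omega
    rw [← heq]
    exact List.take_prefix _ _
  have hvd : v' ∉ q := fun h => hnd (hqpre.subset h)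
  have huq : u ∈ q := hu w (Or.inl hwQ) q hq
  by_cases huv : u = v'
  · exact hvd (huv ▸ huq)
  · have hune : u ≠ v := by
      rintro rfl
      rcases huQ with h | h
      · exact hvQ h
      · exact hvE h
    have hPDu : ProperPD G v u := ⟨fun pp hpp => hu G.End (Or.inr rfl) pp hpp, hune⟩
    have hjq : q.idxOf u < q.length := List.idxOf_lt_length_iff.2 huq
    have hgj : q[q.idxOf u] = u := List.getElem_idxOf hjq
    have hq' : IsPath G.succ (q.take (q.idxOf u + 1)) v u := by
      have h := isPath_take_s10 hq _ hjq
      rwa [hgj] at h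
    have hv'q' : v' ∈ q.take (q.idxOf u + 1) := hf.2 u hPDu huv _ hq'
    exact hvd ((List.take_prefix _ _).subset hv'q')


end Slicing
end
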